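/- For every β ∈ ℤ, Σ_{γ∈ℤ} D₁(γ)·f₁(h(β − γ)) = 2(e^h − 1)/(e^h + 1) (the sum has only finitely many nonzero terms). -/

import Mathlib

/-- The discrete operator `D₁`: `D₁(0) = 2(1+e^{2h})/(1−e^{2h})`,
`D₁(β) = −2e^h/(1−e^{2h})` for `|β| = 1`, and `D₁(β) = 0` for `|β| ≥ 2`. -/
noncomputable def D1 (h : ℝ) (β : ℤ) : ℝ :=
  if β = 0 then 2 * (1 + Real.exp (2 * h)) / (1 - Real.exp (2 * h))
  else if β.natAbs = 1 then -2 * Real.exp h / (1 - Real.exp (2 * h))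
  else 0

/-- `f₁(t) = (e^t + e^{−t} + e^{1−t} + e^{t−1} − 4)/4`. -/
noncomputable def f1 (t : ℝ) : ℝ :=
  (Real.exp t + Real.exp (-t) + Real.exp (1 - t) + Real.exp (t - 1) - 4) / 4

lemma D1_key (t h : ℝ) (hq : 1 - Real.exp (2 * h) ≠ 0) :
    2 * (1 + Real.exp (2 * h)) / (1 - Real.exp (2 * h)) * f1 t +
      (-2 * Real.exp h / (1 - Real.exp (2 * h))) * f1 (t + h) +
      (-2 * Real.exp h / (1 - Real.exp (2 * h))) * f1 (t - h) =
    2 * (Real.exp h - 1) / (Real.exp h + 1) := by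
  have hq0 : Real.exp h ≠ 0 := (Real.exp_pos h).ne'
  have hp : Real.exp h + 1 ≠ 0 := by positivity
  rw [show (2:ℝ) * h = h + h by ring, Real.exp_add] at hq ⊢
  unfold f1
  rw [show t + h - 1 = (t - 1) + h by ring,
      show -(t + h) = -t + -h by ring,
      show 1 - (t + h) = (1 - t) + -h by ring,
      show t - h = t + -h by ring,
      show -(t + -h) = -t + h by ring,
      show 1 - (t + -h) = (1 - t) + h by ring,
      show t + -h - 1 = (t - 1) + -h by ring]
  simp only [Real.exp_add, Real.exp_neg]
  have hq2 : 1 - Real.exp h ^ 2 ≠ 0 := by rw [sq]; exact hq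
  field_simp
  ring

/-- For every `β ∈ ℤ`, `Σ_{γ∈ℤ} D₁(γ)·f₁(h(β − γ)) = 2(e^h − 1)/(e^h + 1)`
(the sum has only finitely many nonzero terms). -/
theorem D1_conv_f1 (N : ℕ) (hN : 1 ≤ N) (h : ℝ) (hh : h = 1 / N) (β : ℤ) :
    (Function.support fun γ : ℤ => D1 h γ * f1 (h * (β - γ))).Finite ∧
    ∑' γ : ℤ, D1 h γ * f1 (h * (β - γ)) = 2 * (Real.exp h - 1) / (Real.exp h + 1) := by
  have hpos : 0 < h := by
    rw [hh]; positivity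
  have hq : 1 - Real.exp (2 * h) ≠ 0 := by
    have : (1:ℝ) < Real.exp (2 * h) := by
      rw [show (1:ℝ) = Real.exp 0 by simp]
      exact Real.exp_lt_exp.mpr (by linarith)
    linarith
  have hzero : ∀ γ : ℤ, γ ∉ ({-1, 0, 1} : Finset ℤ) → D1 h γ * f1 (h * (β - γ)) = 0 := by
    intro γ hγ
    simp only [Finset.mem_insert, Finset.mem_singleton] at hγ
    push_neg at hγ
    have h1 : γ ≠ 0 := hγ.2.1
    have h2 : γ.natAbs ≠ 1 := by omega
    simp [D1, h1, h2]
  constructor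
  · apply Set.Finite.subset (({-1, 0, 1} : Finset ℤ) : Set ℤ).toFinite
    intro γ hγ
    by_contra hc
    exact hγ (hzero γ (by simpa using hc))
  · rw [tsum_eq_sum hzero]
    have hsum : ∑ γ ∈ ({-1, 0, 1} : Finset ℤ), D1 h γ * f1 (h * (β - γ)) =
        D1 h (-1) * f1 (h * (β - (-1))) + D1 h 0 * f1 (h * (β - 0)) +
          D1 h 1 * f1 (h * (β - 1)) := by
      rw [show ({-1, 0, 1} : Finset ℤ) = {-1} ∪ {0} ∪ {1} by rfl]
      rw [Finset.sum_union (by decide), Finset.sum_union (by decide)]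
      simp
    rw [hsum]
    rw [show h * (↑β - (-1)) = h * ↑β + h by ring, show h * (↑β - 0) = h * ↑β by ring,
        show h * (↑β - 1) = h * ↑β - h by ring]
    simp only [D1]
    norm_num
    linear_combination D1_key (h * β) h hq
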